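/- Let m ∈ ℕ₀. Suppose S, H₊, H₋ are bounded linear operators on the complex Hilbert space ℓ²(ℕ₀) whose matrix entries with respect to the standard orthonormal basis (e_n) are ⟨S e_k, e_n⟩ = c_{k+n+2m+1}, ⟨H₊ e_k, e_n⟩ = 1/(k+n+m+1/2), and ⟨H₋ e_k, e_n⟩ = 1/(k+n+m+3/2) for all k, n ∈ ℕ₀, where c_j = (2/(π j))·sin(π j/2) for integers j ≥ 1. Then there exists a unitary operator (linear isometric equivalence) U from ℓ²(ℕ₀) onto ℓ²(ℕ₀) × ℓ²(ℕ₀) such that for every x ∈ ℓ²(ℕ₀): U(S x) = ( ((−1)^m/π)·H₊((U x)₁), ((−1)^{m+1}/π)·H₋((U x)₂) ). -/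

import Mathlib

open MeasureTheory

/-- The Fourier coefficients `c_j = (2/(π j))·sin(π j/2)`. -/
noncomputable def cCoef (j : ℕ) : ℝ := (2 / (Real.pi * j)) * Real.sin (Real.pi * j / 2)

/-- The Hilbert space `ℓ²(ℕ₀)` of square-summable complex sequences. -/
noncomputable abbrev l2 := lp (fun _ : ℕ => ℂ) 2

/-- The standard orthonormal basis vectors of `ℓ²(ℕ₀)`. -/
noncomputable def e (n : ℕ) : l2 := lp.single 2 n (1 : ℂ)

lemma inner_e_left (n : ℕ) (f : l2) : @inner ℂ _ _ (e n) f = f n := by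
  rw [e, lp.inner_single_left]
  simp [RCLike.inner_apply]

lemma inner_e_e (a b : ℕ) : @inner ℂ _ _ (e a) (e b) = if a = b then 1 else 0 := by
  rw [inner_e_left, e, lp.single_apply]
  split_ifs with h <;> simp [h]

lemma l2_ext {f g : l2} (h : ∀ n, @inner ℂ _ _ (e n) f = @inner ℂ _ _ (e n) g) : f = g := by
  ext n
  have := h n
  rwa [inner_e_left, inner_e_left] at this

/-- the candidate orthonormal family in the product space -/
noncomputable def v (n : ℕ) : WithLp 2 (l2 × l2) :=
  (WithLp.equiv 2 (l2 × l2)).symm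
    (if n % 2 = 0 then (((-1 : ℂ) ^ (n / 2)) • e (n / 2), 0)
     else (0, ((-1 : ℂ) ^ (n / 2)) • e (n / 2)))

lemma v_orthonormal : Orthonormal ℂ v := by
  have key : ∀ n : ℕ, @inner ℂ _ _ ((-1 : ℂ) ^ n) ((-1 : ℂ) ^ n) = 1 := by
    intro n
    simp [RCLike.inner_apply, ← pow_add, ← two_mul]
  rw [orthonormal_iff_ite]
  intro i j
  rcases Nat.even_or_odd i with ⟨a, ha⟩ | ⟨a, ha⟩ <;>
    rcases Nat.even_or_odd j with ⟨b, hb⟩ | ⟨b, hb⟩ <;> subst ha hb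
  · have e1 : (a + a) % 2 = 0 := by omega
    have e2 : (a + a) / 2 = a := by omega
    have e3 : (b + b) % 2 = 0 := by omega
    have e4 : (b + b) / 2 = b := by omega
    simp only [v, e1, e2, e3, e4, if_true, WithLp.prod_inner_apply, WithLp.equiv_symm_apply,
      WithLp.ofLp_toLp, inner_smul_left, inner_smul_right, inner_zero_left,
      inner_zero_right, inner_e_e, map_pow, map_neg, map_one, add_zero]
    rcases eq_or_ne a b with rfl | hab
    · simp [← pow_add, ← two_mul]
    · have h2 : ¬(a + a = b + b) := by omega
      simp [hab, h2]
  · have e1 : (a + a) % 2 = 0 := by omega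
    have e2 : (2 * b + 1) % 2 = 1 := by omega
    have h2 : ¬(a + a = 2 * b + 1) := by omega
    simp only [v, e1, e2, if_true, if_false]
    simp [WithLp.prod_inner_apply, h2]
  · have e1 : (2 * a + 1) % 2 = 1 := by omega
    have e2 : (b + b) % 2 = 0 := by omega
    have h2 : ¬(2 * a + 1 = b + b) := by omega
    simp only [v, e1, e2, if_true, if_false]
    simp [WithLp.prod_inner_apply, h2]
  · have e1 : (2 * a + 1) % 2 = 1 := by omega
    have e2 : (2 * a + 1) / 2 = a := by omega
    have e3 : (2 * b + 1) % 2 = 1 := by omega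
    have e4 : (2 * b + 1) / 2 = b := by omega
    simp only [v, e1, e2, e3, e4, if_false, WithLp.prod_inner_apply, WithLp.equiv_symm_apply,
      WithLp.ofLp_toLp, inner_smul_left, inner_smul_right, inner_zero_left,
      inner_zero_right, map_pow, map_neg, map_one, zero_add]
    rcases eq_or_ne a b with rfl | hab
    · simp only [one_ne_zero, if_false, inner_zero_left, zero_add, inner_smul_left,
        inner_smul_right, inner_e_e]
      simp [← pow_add, ← two_mul]
    · have h2 : ¬(2 * a + 1 = 2 * b + 1) := by omega
      simp [inner_smul_left, inner_smul_right, inner_e_e, hab, h2]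


lemma v_even (b : ℕ) : v (2 * b) =
    (WithLp.equiv 2 (l2 × l2)).symm (((-1 : ℂ) ^ b) • e b, 0) := by
  rw [v, if_pos (by omega : (2 * b) % 2 = 0), (by omega : (2 * b) / 2 = b)]

lemma v_odd (b : ℕ) : v (2 * b + 1) =
    (WithLp.equiv 2 (l2 × l2)).symm (0, ((-1 : ℂ) ^ b) • e b) := by
  rw [v, if_neg (by omega : ¬ (2 * b + 1) % 2 = 0), (by omega : (2 * b + 1) / 2 = b)]

lemma v_span_bot : (Submodule.span ℂ (Set.range v))ᗮ = ⊥ := by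
  rw [Submodule.eq_bot_iff]
  intro z hz
  have h : ∀ n : ℕ, @inner ℂ _ _ (v n) z = 0 := fun n =>
    Submodule.inner_right_of_mem_orthogonal (Submodule.subset_span (Set.mem_range_self n)) hz
  have h1 : ∀ b : ℕ, @inner ℂ _ _ (e b) z.fst = 0 := by
    intro b
    have := h (2 * b)
    rw [v_even] at this
    simp only [WithLp.prod_inner_apply, WithLp.equiv_symm_apply, WithLp.ofLp_toLp,
      inner_smul_left, inner_zero_left, add_zero, map_pow, map_neg,
      map_one, mul_eq_zero] at this
    rcases this with h' | h'
    · exact absurd h' (by simp)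
    · exact h'
  have h2 : ∀ b : ℕ, @inner ℂ _ _ (e b) z.snd = 0 := by
    intro b
    have := h (2 * b + 1)
    rw [v_odd] at this
    simp only [WithLp.prod_inner_apply, WithLp.equiv_symm_apply, WithLp.ofLp_toLp,
      inner_smul_left, inner_zero_left, zero_add, map_pow, map_neg,
      map_one, mul_eq_zero] at this
    rcases this with h' | h'
    · exact absurd h' (by simp)
    · exact h'
  have hz1 : z.fst = 0 := l2_ext (by simpa using h1)
  have hz2 : z.snd = 0 := l2_ext (by simpa using h2)
  apply (WithLp.equiv 2 (l2 × l2)).injective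
  apply Prod.ext <;> simp [WithLp.equiv_apply, hz1, hz2]

/-- The Hilbert basis of the product space given by `v`. -/
noncomputable def B : HilbertBasis ℕ ℂ (WithLp 2 (l2 × l2)) :=
  HilbertBasis.mkOfOrthogonalEqBot v_orthonormal v_span_bot

lemma B_coe (n : ℕ) : B n = v n := by
  rw [B, HilbertBasis.coe_mkOfOrthogonalEqBot]

lemma B_symm_e (k : ℕ) : B.repr.symm (e k) = v k := by
  rw [e, B.repr_symm_single, B_coe]

lemma coord_fst (z : l2) (b : ℕ) :
    @inner ℂ _ _ (e b) (WithLp.equiv 2 (l2 × l2) (B.repr.symm z)).fst = (-1 : ℂ) ^ b * z (2 * b) := by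
  have h : @inner ℂ _ _ (B (2 * b)) (B.repr.symm z) = z (2 * b) := by
    rw [← HilbertBasis.repr_apply_apply, LinearIsometryEquiv.apply_symm_apply]
  rw [B_coe, v_even] at h
  simp only [WithLp.prod_inner_apply, WithLp.equiv_symm_apply, WithLp.ofLp_toLp,
    inner_smul_left, inner_zero_left, add_zero, map_pow, map_neg, map_one] at h
  have hp : ((-1 : ℂ)) ^ b * (-1 : ℂ) ^ b = 1 := by
    rw [← pow_add]; exact Even.neg_one_pow ⟨b, rfl⟩
  rw [WithLp.equiv_apply, ← h, ← mul_assoc, hp, one_mul]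

lemma coord_snd (z : l2) (b : ℕ) :
    @inner ℂ _ _ (e b) (WithLp.equiv 2 (l2 × l2) (B.repr.symm z)).snd = (-1 : ℂ) ^ b * z (2 * b + 1) := by
  have h : @inner ℂ _ _ (B (2 * b + 1)) (B.repr.symm z) = z (2 * b + 1) := by
    rw [← HilbertBasis.repr_apply_apply, LinearIsometryEquiv.apply_symm_apply]
  rw [B_coe, v_odd] at h
  simp only [WithLp.prod_inner_apply, WithLp.equiv_symm_apply, WithLp.ofLp_toLp,
    inner_smul_left, inner_zero_left, zero_add, map_pow, map_neg, map_one] at h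
  have hp : ((-1 : ℂ)) ^ b * (-1 : ℂ) ^ b = 1 := by
    rw [← pow_add]; exact Even.neg_one_pow ⟨b, rfl⟩
  rw [WithLp.equiv_apply, ← h, ← mul_assoc, hp, one_mul]

lemma cCoef_even (N : ℕ) : cCoef (2 * N) = 0 := by
  have h : Real.pi * (2 * N : ℕ) / 2 = N * Real.pi := by push_cast; ring
  rw [cCoef, h, Real.sin_nat_mul_pi, mul_zero]

lemma cCoef_odd (N : ℕ) : cCoef (2 * N + 1) = (-1) ^ N * (2 / (Real.pi * (2 * N + 1))) := by
  have h : Real.pi * (2 * N + 1 : ℕ) / 2 = Real.pi / 2 + N * Real.pi := by push_cast; ring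
  rw [cCoef, h, Real.sin_add_nat_mul_pi, Real.sin_pi_div_two, mul_one]
  push_cast
  ring

lemma e_orthonormal : Orthonormal ℂ e := by
  rw [orthonormal_iff_ite]; intro i j; rw [inner_e_e]

lemma e_span_bot : (Submodule.span ℂ (Set.range e))ᗮ = ⊥ := by
  rw [Submodule.eq_bot_iff]
  intro z hz
  refine l2_ext (fun n => ?_)
  rw [inner_zero_right]
  exact Submodule.inner_right_of_mem_orthogonal
    (Submodule.subset_span (Set.mem_range_self n)) hz

lemma e_span_dense : Dense ((Submodule.span ℂ (Set.range e) : Submodule ℂ l2) : Set l2) := by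
  rw [Submodule.dense_iff_topologicalClosure_eq_top]
  have h := HilbertBasis.dense_span (HilbertBasis.mkOfOrthogonalEqBot e_orthonormal e_span_bot)
  rwa [HilbertBasis.coe_mkOfOrthogonalEqBot] at h

lemma key1 (a b m : ℕ) : (-1 : ℝ) ^ b * cCoef (2 * (a + b + m) + 1) =
    ((-1 : ℝ) ^ m / Real.pi) * ((-1 : ℝ) ^ a * (1 / ((a : ℝ) + b + m + 1 / 2))) := by
  rw [cCoef_odd]
  have hπ := Real.pi_ne_zero
  have h1 : ((a : ℝ) + b + m + 1 / 2) ≠ 0 := by positivity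
  have h2 : (2 * ((a : ℝ) + b + m) + 1) ≠ 0 := by positivity
  rw [pow_add, pow_add]
  push_cast
  field_simp
  ring_nf
  simp [mul_comm _ 2, pow_mul]

lemma key2 (a b m : ℕ) : (-1 : ℝ) ^ b * cCoef (2 * (a + b + m + 1) + 1) =
    ((-1 : ℝ) ^ (m + 1) / Real.pi) * ((-1 : ℝ) ^ a * (1 / ((a : ℝ) + b + m + 3 / 2))) := by
  rw [cCoef_odd]
  have hπ := Real.pi_ne_zero
  have h1 : ((a : ℝ) + b + m + 3 / 2) ≠ 0 := by positivity
  have h2 : (2 * ((a : ℝ) + b + m + 1) + 1) ≠ 0 := by positivity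
  rw [pow_add, pow_add, pow_add]
  push_cast
  field_simp
  ring_nf
  simp [mul_comm _ 2, pow_mul]


set_option maxHeartbeats 1000000 in
set_option synthInstance.maxHeartbeats 1000000 in
theorem stmt_11 (m : ℕ) (S Hp Hm : l2 →L[ℂ] l2)
    (hS : ∀ k n : ℕ, @inner ℂ _ _ (S (e k)) (e n) = ((cCoef (k + n + 2 * m + 1) : ℝ) : ℂ))
    (hHp : ∀ k n : ℕ,
      @inner ℂ _ _ (Hp (e k)) (e n) = ((1 / ((k : ℝ) + n + m + 1 / 2) : ℝ) : ℂ))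
    (hHm : ∀ k n : ℕ,
      @inner ℂ _ _ (Hm (e k)) (e n) = ((1 / ((k : ℝ) + n + m + 3 / 2) : ℝ) : ℂ)) :
    ∃ U : l2 ≃ₗᵢ[ℂ] WithLp 2 (l2 × l2),
      ∀ x : l2,
        WithLp.equiv 2 (l2 × l2) (U (S x)) =
          ((((-1 : ℝ) ^ m / Real.pi : ℝ) : ℂ) • Hp ((WithLp.equiv 2 (l2 × l2) (U x)).1),
            (((-1 : ℝ) ^ (m + 1) / Real.pi : ℝ) : ℂ) • Hm ((WithLp.equiv 2 (l2 × l2) (U x)).2)) := by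
  classical
  set c1 : ℂ := (((-1 : ℝ) ^ m / Real.pi : ℝ) : ℂ) with hc1
  set c2 : ℂ := (((-1 : ℝ) ^ (m + 1) / Real.pi : ℝ) : ℂ) with hc2
  have coefS : ∀ k n : ℕ, (S (e k) : ℕ → ℂ) n = ((cCoef (k + n + 2 * m + 1) : ℝ) : ℂ) := by
    intro k n
    have h2 : @inner ℂ _ _ (e n) (S (e k)) = ((cCoef (k + n + 2 * m + 1) : ℝ) : ℂ) := by
      rw [← inner_conj_symm, hS k n, Complex.conj_ofReal]
    rwa [inner_e_left] at h2
  have coefHp : ∀ k n : ℕ, (Hp (e k) : ℕ → ℂ) n = ((1 / ((k : ℝ) + n + m + 1 / 2) : ℝ) : ℂ) := by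
    intro k n
    have h2 : @inner ℂ _ _ (e n) (Hp (e k)) = ((1 / ((k : ℝ) + n + m + 1 / 2) : ℝ) : ℂ) := by
      rw [← inner_conj_symm, hHp k n, Complex.conj_ofReal]
    rwa [inner_e_left] at h2
  have coefHm : ∀ k n : ℕ, (Hm (e k) : ℕ → ℂ) n = ((1 / ((k : ℝ) + n + m + 3 / 2) : ℝ) : ℂ) := by
    intro k n
    have h2 : @inner ℂ _ _ (e n) (Hm (e k)) = ((1 / ((k : ℝ) + n + m + 3 / 2) : ℝ) : ℂ) := by
      rw [← inner_conj_symm, hHm k n, Complex.conj_ofReal]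
    rwa [inner_e_left] at h2
  refine ⟨B.repr.symm, ?_⟩
  -- the key pointwise identity on basis vectors
  have key : ∀ k : ℕ,
      B.repr.symm (S (e k)) = (WithLp.equiv 2 (l2 × l2)).symm
        (c1 • Hp ((WithLp.equiv 2 (l2 × l2) (B.repr.symm (e k))).1),
         c2 • Hm ((WithLp.equiv 2 (l2 × l2) (B.repr.symm (e k))).2)) := by
    intro k
    rw [B_symm_e]
    apply (WithLp.equiv 2 (l2 × l2)).injective
    rw [Equiv.apply_symm_apply]
    rcases Nat.even_or_odd k with ⟨a, ha⟩ | ⟨a, ha⟩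
    · have hk : k = 2 * a := by omega
      subst hk
      rw [v_even, Equiv.apply_symm_apply]
      apply Prod.ext
      · show (WithLp.equiv 2 (l2 × l2) (B.repr.symm (S (e (2 * a))))).1
          = c1 • Hp ((-1 : ℂ) ^ a • e a)
        refine l2_ext fun b => ?_
        rw [coord_fst, _root_.map_smul, inner_smul_right, inner_smul_right, inner_e_left,
          coefS, coefHp, hc1]
        rw [show 2 * a + 2 * b + 2 * m + 1 = 2 * (a + b + m) + 1 by omega]
        have hcast : ∀ n : ℕ, ((-1 : ℂ)) ^ n = (((-1 : ℝ) ^ n : ℝ) : ℂ) := by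
          intro n; push_cast; ring
        rw [hcast, hcast, ← Complex.ofReal_mul, ← Complex.ofReal_mul, ← Complex.ofReal_mul,
          Complex.ofReal_inj]
        exact key1 a b m
      · show (WithLp.equiv 2 (l2 × l2) (B.repr.symm (S (e (2 * a))))).2 = c2 • Hm 0
        rw [map_zero, smul_zero]
        refine l2_ext fun b => ?_
        rw [coord_snd, coefS, inner_zero_right]
        rw [show 2 * a + (2 * b + 1) + 2 * m + 1 = 2 * (a + b + m + 1) by omega, cCoef_even]
        simp
    · subst ha
      rw [v_odd, Equiv.apply_symm_apply]
      apply Prod.ext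
      · show (WithLp.equiv 2 (l2 × l2) (B.repr.symm (S (e (2 * a + 1))))).1 = c1 • Hp 0
        rw [map_zero, smul_zero]
        refine l2_ext fun b => ?_
        rw [coord_fst, coefS, inner_zero_right]
        rw [show 2 * a + 1 + 2 * b + 2 * m + 1 = 2 * (a + b + m + 1) by omega, cCoef_even]
        simp
      · show (WithLp.equiv 2 (l2 × l2) (B.repr.symm (S (e (2 * a + 1))))).2
          = c2 • Hm ((-1 : ℂ) ^ a • e a)
        refine l2_ext fun b => ?_
        rw [coord_snd, _root_.map_smul, inner_smul_right, inner_smul_right, inner_e_left,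
          coefS, coefHm, hc2]
        rw [show 2 * a + 1 + (2 * b + 1) + 2 * m + 1 = 2 * (a + b + m + 1) + 1 by omega]
        have hcast : ∀ n : ℕ, ((-1 : ℂ)) ^ n = (((-1 : ℝ) ^ n : ℝ) : ℂ) := by
          intro n; push_cast; ring
        rw [hcast, hcast, ← Complex.ofReal_mul, ← Complex.ofReal_mul, ← Complex.ofReal_mul,
          Complex.ofReal_inj]
        exact key2 a b m
  -- upgrade to all x by density
  set pe := WithLp.prodContinuousLinearEquiv 2 ℂ l2 l2 with hpe
  set Uc : l2 →L[ℂ] WithLp 2 (l2 × l2) :=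
    ((B.repr.symm.toContinuousLinearEquiv :
      l2 ≃L[ℂ] WithLp 2 (l2 × l2)) : l2 →L[ℂ] WithLp 2 (l2 × l2)) with hUc
  set T1 : l2 →L[ℂ] WithLp 2 (l2 × l2) := Uc.comp S with hT1
  set T2 : l2 →L[ℂ] WithLp 2 (l2 × l2) :=
    (pe.symm : l2 × l2 →L[ℂ] WithLp 2 (l2 × l2)).comp
      (((c1 • Hp).comp ((ContinuousLinearMap.fst ℂ l2 l2).comp
          ((pe : WithLp 2 (l2 × l2) →L[ℂ] l2 × l2).comp Uc))).prod
        ((c2 • Hm).comp ((ContinuousLinearMap.snd ℂ l2 l2).comp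
          ((pe : WithLp 2 (l2 × l2) →L[ℂ] l2 × l2).comp Uc)))) with hT2
  have hUcx : ∀ x : l2, Uc x = B.repr.symm x := fun x => rfl
  have hpex : ∀ z : WithLp 2 (l2 × l2), pe z = WithLp.equiv 2 (l2 × l2) z := fun z => rfl
  have hpesx : ∀ y : l2 × l2, pe.symm y = (WithLp.equiv 2 (l2 × l2)).symm y := fun y => rfl
  have hT : T1 = T2 := by
    apply ContinuousLinearMap.ext_on e_span_dense
    rintro _ ⟨k, rfl⟩
    simp only [hT1, hT2, ContinuousLinearMap.comp_apply, ContinuousLinearMap.prod_apply,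
      ContinuousLinearMap.coe_fst', ContinuousLinearMap.coe_snd',
      ContinuousLinearMap.smul_apply, ContinuousLinearMap.coe_smul',
      ContinuousLinearEquiv.coe_coe]
    rw [hUcx, hUcx, hpex, hpesx]
    simpa using key k
  intro x
  have hx : T1 x = T2 x := by rw [hT]
  simp only [hT1, hT2, ContinuousLinearMap.comp_apply, ContinuousLinearMap.prod_apply,
    ContinuousLinearMap.coe_fst', ContinuousLinearMap.coe_snd',
    ContinuousLinearMap.smul_apply, ContinuousLinearMap.coe_smul',
    ContinuousLinearEquiv.coe_coe] at hx
  rw [hUcx, hUcx, hpex, hpesx] at hx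
  rw [hx, Equiv.apply_symm_apply]
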